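/- Let L_n, L be closed subspaces of a Hilbert space H with orthogonal projections Π_n, Π, and v^{(n)}, v nonzero vectors with v ∉ L. If Π_n → Π in the strong operator topology and v^{(n)} → v in H, then the orthogonal projections onto L_n + ℂ v^{(n)} converge in the strong operator topology to the orthogonal projection onto L ⊕ ℂ v. -/

import Mathlib

open ContinuousLinearMap Filter MeasureTheory
open scoped NNReal ENNReal Topology

noncomputable section

variable {H : Type*} [NormedAddCommGroup H] [InnerProductSpace ℂ H] [CompleteSpace H]
variable {ι : Type*}

/-- `T` is Hilbert–Schmidt w.r.t. the Hilbert basis `e`. -/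
def IsHS (e : HilbertBasis ι ℂ H) (T : H →L[ℂ] H) : Prop :=
  Summable fun i => ‖T (e i)‖ ^ 2

/-- Hilbert–Schmidt norm of `T` w.r.t. the Hilbert basis `e`. -/
noncomputable def hsNorm (e : HilbertBasis ι ℂ H) (T : H →L[ℂ] H) : ℝ :=
  Real.sqrt (∑' i, ‖T (e i)‖ ^ 2)

/-- Trace of `T` w.r.t. the Hilbert basis `e`. -/
noncomputable def opTrace (e : HilbertBasis ι ℂ H) (T : H →L[ℂ] H) : ℂ :=
  ∑' i, (inner ℂ (e i : H) (T (e i)) : ℂ)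

/-- `T` is trace class: it is a product of two Hilbert–Schmidt operators. -/
def IsTraceClass (e : HilbertBasis ι ℂ H) (T : H →L[ℂ] H) : Prop :=
  ∃ A B : H →L[ℂ] H, IsHS e A ∧ IsHS e B ∧ T = adjoint A ∘L B

/-- Trace norm `tr √(T* T)` w.r.t. the Hilbert basis `e`. -/
noncomputable def traceNorm (e : HilbertBasis ι ℂ H) (T : H →L[ℂ] H) : ℝ :=
  ∑' i, ((inner ℂ (e i : H) ((CFC.sqrt (adjoint T * T)) (e i)) : ℂ)).re

/-- The orthogonal projection onto `K`, as an operator `H →L[ℂ] H`. -/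
noncomputable def projCLM (K : Submodule ℂ H) [Submodule.HasOrthogonalProjection K] : H →L[ℂ] H :=
  K.subtypeL ∘L K.orthogonalProjectionOnto

lemma projCLM_apply (K : Submodule ℂ H) [Submodule.HasOrthogonalProjection K] (x : H) :
    projCLM K x = (K.orthogonalProjectionOnto x : H) := rfl

lemma projCLM_mem (K : Submodule ℂ H) [Submodule.HasOrthogonalProjection K] (x : H) :
    projCLM K x ∈ K := (K.orthogonalProjectionOnto x).2

lemma norm_projCLM_apply_le (K : Submodule ℂ H) [Submodule.HasOrthogonalProjection K] (x : H) :
    ‖projCLM K x‖ ≤ ‖x‖ := by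
  rw [projCLM_apply]
  calc ‖(K.orthogonalProjectionOnto x : H)‖ ≤ ‖K.orthogonalProjectionOnto‖ * ‖x‖ := by
        simpa using K.orthogonalProjectionOnto.le_opNorm x
    _ ≤ 1 * ‖x‖ := by gcongr; exacts [Submodule.orthogonalProjectionOnto_norm_le K]
    _ = ‖x‖ := one_mul _

lemma projCLM_sup_span (K : Submodule ℂ H) [Submodule.HasOrthogonalProjection K] (u : H)
    [Submodule.HasOrthogonalProjection (K ⊔ Submodule.span ℂ {u})]
    (hw : u - projCLM K u ≠ 0) (x : H) :
    projCLM (K ⊔ Submodule.span ℂ {u}) x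
      = projCLM K x + ((inner ℂ (u - projCLM K u) x : ℂ) / ((‖u - projCLM K u‖ : ℂ) ^ 2))
          • (u - projCLM K u) := by
  set w : H := u - projCLM K u with hwdef
  have hwKo : w ∈ Kᗮ := Submodule.sub_starProjection_mem_orthogonal u
  set c : ℂ := (inner ℂ w x : ℂ) / ((‖w‖ : ℂ) ^ 2) with hc
  have hKle : K ≤ K ⊔ Submodule.span ℂ {u} := le_sup_left
  have huMem : u ∈ K ⊔ Submodule.span ℂ {u} :=
    le_sup_right (α := Submodule ℂ H) (Submodule.mem_span_singleton_self u)
  have hwMem : w ∈ K ⊔ Submodule.span ℂ {u} :=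
    sub_mem huMem (hKle (projCLM_mem K u))
  have hmem : projCLM K x + c • w ∈ K ⊔ Submodule.span ℂ {u} :=
    add_mem (hKle (projCLM_mem K x)) (Submodule.smul_mem _ _ hwMem)
  have horth : x - (projCLM K x + c • w) ∈ (K ⊔ Submodule.span ℂ {u})ᗮ := by
    rw [← Submodule.inf_orthogonal, Submodule.mem_inf]
    constructor
    · -- in Kᗮ
      have h1 : x - projCLM K x ∈ Kᗮ := Submodule.sub_starProjection_mem_orthogonal x
      have h2 : c • w ∈ Kᗮ := Submodule.smul_mem _ _ hwKo
      have := sub_mem h1 h2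
      simpa [sub_sub] using this
    · -- in (span u)ᗮ
      rw [Submodule.mem_orthogonal_singleton_iff_inner_right]
      have hu : u = projCLM K u + w := by rw [hwdef]; abel
      have hPx : (inner ℂ (projCLM K u) (x - (projCLM K x + c • w)) : ℂ) = 0 := by
        have h1 : x - projCLM K x ∈ Kᗮ := Submodule.sub_starProjection_mem_orthogonal x
        have e1 : (inner ℂ (projCLM K u) (x - projCLM K x) : ℂ) = 0 :=
          h1 _ (projCLM_mem K u)
        have e2 : (inner ℂ (projCLM K u) (w : H) : ℂ) = 0 := hwKo _ (projCLM_mem K u)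
        rw [show x - (projCLM K x + c • w) = (x - projCLM K x) - c • w by abel]
        rw [inner_sub_right, inner_smul_right, e1, e2, mul_zero, sub_zero]
      have hwz : (inner ℂ w (x - (projCLM K x + c • w)) : ℂ) = 0 := by
        have e2 : (inner ℂ w (projCLM K x) : ℂ) = 0 := by
          have := (Submodule.mem_orthogonal _ _).1 hwKo _ (projCLM_mem K x)
          rw [← inner_conj_symm, this, map_zero]
        rw [inner_sub_right, inner_add_right, inner_smul_right, e2,
          inner_self_eq_norm_sq_to_K]
        have hnw : ((‖w‖ : ℂ) ^ 2) ≠ 0 := by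
          simp [pow_eq_zero_iff, norm_eq_zero, hw]
        rw [hc]
        field_simp
        simp [hw]
      rw [hu, inner_add_left, hPx, hwz, add_zero]
  rw [projCLM_apply]
  exact Submodule.eq_starProjection_of_mem_orthogonal hmem horth

/-- if the projections onto `Ln` converge strongly to the projection onto `L`
and `vn -> v` with `v ∉ L`, then the orthogonal projections onto `Ln + ℂ vn` converge
strongly to the orthogonal projection onto `L ⊕ ℂ v`. -/
theorem stmt5 (L : ℕ → Submodule ℂ H) [∀ n, Submodule.HasOrthogonalProjection (L n)]
    (L' : Submodule ℂ H) [Submodule.HasOrthogonalProjection L']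
    (v : ℕ → H) (v' : H)
    [∀ n, Submodule.HasOrthogonalProjection (L n ⊔ Submodule.span ℂ {v n})]
    [Submodule.HasOrthogonalProjection (L' ⊔ Submodule.span ℂ {v'})]
    (hv : ∀ n, v n ≠ 0) (hv' : v' ≠ 0) (hvL : v' ∉ L')
    (hstrong : ∀ x : H, Tendsto (fun n => projCLM (L n) x) atTop (𝓝 (projCLM L' x)))
    (hvconv : Tendsto v atTop (𝓝 v')) :
    ∀ x : H,
      Tendsto (fun n => projCLM (L n ⊔ Submodule.span ℂ {v n}) x) atTop
        (𝓝 (projCLM (L' ⊔ Submodule.span ℂ {v'}) x)) := by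
  intro x
  set w : ℕ → H := fun n => v n - projCLM (L n) (v n) with hwdef
  set w' : H := v' - projCLM L' v' with hw'def
  have hw' : w' ≠ 0 := by
    intro h
    apply hvL
    have : v' = projCLM L' v' := by rwa [hw'def, sub_eq_zero] at h
    rw [this]; exact projCLM_mem L' v'
  -- projections applied to v n converge
  have hPv : Tendsto (fun n => projCLM (L n) (v n)) atTop (𝓝 (projCLM L' v')) := by
    have hdiff : Tendsto (fun n => projCLM (L n) (v n) - projCLM L' v') atTop (𝓝 0) := by
      apply squeeze_zero_norm (a := fun n => ‖v n - v'‖ + ‖projCLM (L n) v' - projCLM L' v'‖)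
      · intro n
        calc ‖projCLM (L n) (v n) - projCLM L' v'‖
            ≤ ‖projCLM (L n) (v n) - projCLM (L n) v'‖ + ‖projCLM (L n) v' - projCLM L' v'‖ :=
              norm_sub_le_norm_sub_add_norm_sub _ _ _
          _ ≤ ‖v n - v'‖ + ‖projCLM (L n) v' - projCLM L' v'‖ := by
              gcongr
              rw [← map_sub]
              exact norm_projCLM_apply_le _ _
      · have h1 : Tendsto (fun n => ‖v n - v'‖) atTop (𝓝 0) := by
          simpa using (hvconv.sub (tendsto_const_nhds (x := v'))).norm
        have h2 : Tendsto (fun n => ‖projCLM (L n) v' - projCLM L' v'‖) atTop (𝓝 0) := by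
          simpa using ((hstrong v').sub (tendsto_const_nhds (x := projCLM L' v'))).norm
        simpa using h1.add h2
    have := hdiff.add (tendsto_const_nhds (x := projCLM L' v'))
    simpa using this
  have hwconv : Tendsto w atTop (𝓝 w') := hvconv.sub hPv
  have hne : ∀ᶠ n in atTop, w n ≠ 0 := hwconv.eventually_ne hw'
  -- the limit expression
  have hlim : projCLM (L' ⊔ Submodule.span ℂ {v'}) x
      = projCLM L' x + ((inner ℂ w' x : ℂ) / ((‖w'‖ : ℂ) ^ 2)) • w' :=
    projCLM_sup_span L' v' hw' x
  have hnorm : Tendsto (fun n => ((‖w n‖ : ℂ) ^ 2)) atTop (𝓝 ((‖w'‖ : ℂ) ^ 2)) := by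
    exact ((Complex.continuous_ofReal.tendsto _).comp hwconv.norm).pow 2
  have hinner : Tendsto (fun n => (inner ℂ (w n) x : ℂ)) atTop (𝓝 (inner ℂ w' x : ℂ)) :=
    hwconv.inner tendsto_const_nhds
  have hden : ((‖w'‖ : ℂ) ^ 2) ≠ 0 := by
    simp [pow_eq_zero_iff, hw']
  have hT : Tendsto (fun n => projCLM (L n) x
      + ((inner ℂ (w n) x : ℂ) / ((‖w n‖ : ℂ) ^ 2)) • (w n)) atTop
      (𝓝 (projCLM (L' ⊔ Submodule.span ℂ {v'}) x)) := by
    rw [hlim]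
    exact (hstrong x).add ((hinner.div hnorm hden).smul hwconv)
  refine hT.congr' ?_
  filter_upwards [hne] with n hn
  exact (projCLM_sup_span (L n) (v n) hn x).symm
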